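/- The lex category freely generated by a single object is equivalent to the opposite of the category of finite sets. -/

import Mathlib

open CategoryTheory Limits Opposite

universe u

set_option linter.unusedSectionVars false
set_option linter.unusedVariables false
set_option maxHeartbeats 1000000

namespace FreeLexAux

variable {O : Type (u + 1)} [Category.{u} O] [HasFiniteLimits O]

/-- The category of lex functors `O ⥤ Type u`. -/
abbrev LexCat (O : Type (u + 1)) [Category.{u} O] :=
  ObjectProperty.FullSubcategory fun H : O ⥤ Type u => Nonempty (PreservesFiniteLimits H)

/-- Coyoneda embedding into lex functors. -/
noncomputable def yo : Oᵒᵖ ⥤ LexCat O :=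
  ObjectProperty.lift _ coyoneda fun X => ⟨inferInstance⟩

instance : (yo (O := O)).Faithful := by
  unfold yo; infer_instance

instance : (yo (O := O)).Full := by
  unfold yo; infer_instance

@[simp] lemma yo_obj_obj (X : Oᵒᵖ) : (yo.obj X).obj = coyoneda.obj X := rfl

/-- hom out of a representable, Yoneda. -/
noncomputable def yoEquiv (X : O) (F : LexCat O) : (yo.obj (op X) ⟶ F) ≃ F.obj.obj X :=
  InducedCategory.homEquiv.trans coyonedaEquiv

lemma yoEquiv_comp {X : O} {F G : LexCat O} (α : yo.obj (op X) ⟶ F) (β : F ⟶ G) :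
    yoEquiv X G (α ≫ β) = β.hom.app _ (yoEquiv X F α) :=
  coyonedaEquiv_comp α.hom β.hom

lemma yoEquiv_yo_map {X Y : O} (f : X ⟶ Y) :
    yoEquiv Y (yo.obj (op X)) (yo.map f.op) = f :=
  coyonedaEquiv_coyoneda_map f

lemma yoEquiv_yo_map_comp {X Y : O} (f : X ⟶ Y) {F : LexCat O} (α : yo.obj (op X) ⟶ F) :
    yoEquiv Y F (yo.map f.op ≫ α) = F.obj.map f (yoEquiv X F α) :=
  (coyonedaEquiv_naturality α.hom f).symm

end FreeLexAux

namespace FreeLexAux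

variable {O : Type (u + 1)} [Category.{u} O] [HasFiniteLimits O]

section Pi

variable {n : ℕ} (f : Fin n → O)

/-- Concrete limit cone for a discrete diagram in `Type u` indexed by `Fin n`. -/
def ptCone (G : Discrete (Fin n) ⥤ Type u) : Cone G where
  pt := ∀ i : Fin n, G.obj ⟨i⟩
  π := Discrete.natTrans fun ⟨i⟩ => TypeCat.ofHom fun g => g i

def ptConeIsLimit (G : Discrete (Fin n) ⥤ Type u) : IsLimit (ptCone G) where
  lift := fun s => TypeCat.ofHom fun x i => s.π.app ⟨i⟩ x
  uniq := fun s m w => by ext x; funext i; exact types_congr_hom (w ⟨i⟩) x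

/-- A lex functor takes finite products to products of types. -/
noncomputable def piCmp (F : O ⥤ Type u) [PreservesFiniteLimits F] :
    F.obj (∏ᶜ f) ≃ ∀ i, F.obj (f i) :=
  (IsLimit.conePointUniqueUpToIso
    (isLimitOfPreserves F (limit.isLimit (Discrete.functor f)))
    (ptConeIsLimit (Discrete.functor f ⋙ F))).toEquiv

lemma piCmp_apply (F : O ⥤ Type u) [PreservesFiniteLimits F] (x : F.obj (∏ᶜ f)) (i : Fin n) :
    piCmp f F x i = F.map (Pi.π f i) x := by
  have h := IsLimit.conePointUniqueUpToIso_hom_comp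
    (isLimitOfPreserves F (limit.isLimit (Discrete.functor f)))
    (ptConeIsLimit (Discrete.functor f ⋙ F)) ⟨i⟩
  exact types_congr_hom h x

end Pi

end FreeLexAux

namespace FreeLexAux

variable {O : Type (u + 1)} [Category.{u} O] [HasFiniteLimits O]

section Cofan

variable {n : ℕ} (f : Fin n → O)

/-- The representable at a finite product is the coproduct of the representables. -/
noncomputable def yoCofan : Cofan (fun i : Fin n => yo.obj (op (f i))) :=
  Cofan.mk (yo.obj (op (∏ᶜ f))) fun i => yo.map (Pi.π f i).op

noncomputable def yoCofanIsColimit : IsColimit (yoCofan f) := by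
  refine mkCofanColimit _ (fun t => ?_) (fun t i => ?_) (fun t m hm => ?_)
  · letI : PreservesFiniteLimits t.pt.obj := t.pt.property.some
    exact (yoEquiv _ _).symm ((piCmp f t.pt.obj).symm fun i => yoEquiv _ _ (t.inj i))
  · letI : PreservesFiniteLimits t.pt.obj := t.pt.property.some
    apply (yoEquiv _ _).injective
    show yoEquiv _ _ (yo.map (Pi.π f i).op ≫ _) = _
    rw [yoEquiv_yo_map_comp]
    rw [Equiv.apply_symm_apply]
    have := congr_fun (funext fun j => piCmp_apply f t.pt.obj
      ((piCmp f t.pt.obj).symm fun j => yoEquiv _ _ (t.inj j)) j) i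
    rw [← this, Equiv.apply_symm_apply]
  · letI : PreservesFiniteLimits t.pt.obj := t.pt.property.some
    apply (yoEquiv _ _).injective
    rw [Equiv.apply_symm_apply]
    apply (piCmp f t.pt.obj).injective
    rw [Equiv.apply_symm_apply]
    funext i
    rw [piCmp_apply]
    have : t.pt.obj.map (Pi.π f i) (yoEquiv _ _ m) = yoEquiv _ _ (yo.map (Pi.π f i).op ≫ m) :=
      (yoEquiv_yo_map_comp (Pi.π f i) m).symm
    rw [this]
    congr 1
    exact hm i

end Cofan

end FreeLexAux

namespace FreeLexAux

variable {O : Type (u + 1)} [Category.{u} O] [HasFiniteLimits O]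

section Colim

variable {K : Type u} [SmallCategory K] [IsFiltered K] (D : K ⥤ LexCat O)

noncomputable instance colimLex :
    PreservesFiniteLimits (colimit (D ⋙ ObjectProperty.ι _)) := by
  have h1 : PreservesFiniteLimits ((D ⋙ ObjectProperty.ι _).flip) := by
    apply preservesFiniteLimits_of_preservesFiniteLimitsOfSize.{0}
    intro J _ _
    apply preservesLimitsOfShape_of_evaluation
    intro k
    have : PreservesFiniteLimits ((D ⋙ ObjectProperty.ι _).obj k) :=
      (D.obj k).property.some
    exact preservesLimitsOfShape_of_natIso
      (flipCompEvaluation (D ⋙ ObjectProperty.ι _) k).symm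
  have h2 : PreservesFiniteLimits
      ((D ⋙ ObjectProperty.ι _).flip ⋙ (colim : (K ⥤ Type u) ⥤ Type u)) :=
    comp_preservesFiniteLimits _ _
  exact preservesFiniteLimits_of_natIso
    (colimitIsoFlipCompColim (D ⋙ ObjectProperty.ι _)).symm

/-- The pointwise colimit cocone of a filtered diagram of lex functors, in `LexCat`. -/
noncomputable def lexColimCocone : Cocone D where
  pt := ⟨colimit (D ⋙ ObjectProperty.ι _), ⟨colimLex D⟩⟩
  ι :=
    { app := fun k => ObjectProperty.homMk (colimit.ι (D ⋙ ObjectProperty.ι _) k :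
        (D.obj k).obj ⟶ colimit (D ⋙ ObjectProperty.ι _))
      naturality := fun k k' g => by
        apply InducedCategory.Hom.ext
        have := colimit.w (D ⋙ ObjectProperty.ι _) g
        simpa using this }

noncomputable def lexColimCoconeIsColimit : IsColimit (lexColimCocone D) where
  desc s := ObjectProperty.homMk (colimit.desc _ ((ObjectProperty.ι _).mapCocone s))
  fac s k := InducedCategory.Hom.ext (colimit.ι_desc ((ObjectProperty.ι _).mapCocone s) k)
  uniq s m hm := InducedCategory.Hom.ext (
    colimit.hom_ext (F := D ⋙ ObjectProperty.ι _) fun k => by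
      refine (congrArg InducedCategory.Hom.hom (hm k)).trans ?_
      exact (colimit.ι_desc ((ObjectProperty.ι _).mapCocone s) k).symm)

end Colim

end FreeLexAux

namespace FreeLexAux

variable {O : Type (u + 1)} [Category.{u} O] [HasFiniteLimits O]

section Finiteness

variable (T : Type u)

/-- The diagram of finite subsets of `T`. -/
def subsetDiagram : Finset T ⥤ Type u where
  obj A := {x : T // x ∈ A}
  map {A B} h := TypeCat.ofHom fun x => ⟨x.1, leOfHom h x.2⟩

/-- `T` is the filtered colimit of its finite subsets. -/
def subsetCocone : Cocone (subsetDiagram T) where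
  pt := T
  ι := { app := fun _ => TypeCat.ofHom fun x => x.1 }

def subsetCoconeIsColimit : IsColimit (subsetCocone T) where
  desc s := TypeCat.ofHom fun t => s.ι.app {t} ⟨t, Finset.mem_singleton_self t⟩
  fac s A := by
    ext x
    have h : ({x.1} : Finset T) ⟶ A := homOfLE (Finset.singleton_subset_iff.2 x.2)
    have := types_congr_hom (s.w h) ⟨x.1, Finset.mem_singleton_self x.1⟩
    exact this.symm
  uniq s m hm := by
    ext t
    exact types_congr_hom (hm {t}) ⟨t, Finset.mem_singleton_self t⟩

variable {T}

lemma finite_of_yo_iso_inverse (e : LexCat O ≌ Type u) (X : O)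
    (hX : e.functor.obj (yo.obj (op X)) = T) : Finite T := by
  subst hX
  set T := e.functor.obj (yo.obj (op X)) with hT
  -- the colimit cocone in LexCat with point `e.inverse.obj T`
  let D : Finset T ⥤ LexCat O := subsetDiagram T ⋙ e.inverse
  have hc : IsColimit (e.inverse.mapCocone (subsetCocone T)) :=
    isColimitOfPreserves e.inverse (subsetCoconeIsColimit T)
  have hl := lexColimCoconeIsColimit D
  -- compare the two colimits
  let iso := hl.coconePointUniqueUpToIso hc
  -- the canonical iso `yo X ≅ e.inverse T`
  let uX : yo.obj (op X) ≅ e.inverse.obj T := e.unitIso.app (yo.obj (op X))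
  -- the element of the pointwise colimit corresponding to `uX.hom ≫ iso.inv`
  let ψ : yo.obj (op X) ⟶ (lexColimCocone D).pt := uX.hom ≫ iso.inv
  obtain ⟨A, y, hy⟩ := Types.jointly_surjective'.{u, u}
    ((colimitObjIsoColimitCompEvaluation (D ⋙ ObjectProperty.ι _) X).hom
      (yoEquiv X _ ψ))
  -- `g : yo X ⟶ D.obj A` with `g ≫ (lexColimCocone D).ι.app A = ψ`
  let g : yo.obj (op X) ⟶ D.obj A := (yoEquiv X (D.obj A)).symm y
  have hg : g ≫ (lexColimCocone D).ι.app A = ψ := by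
    apply (yoEquiv X _).injective
    rw [yoEquiv_comp]
    rw [Equiv.apply_symm_apply]
    have h3 : (colimitObjIsoColimitCompEvaluation (D ⋙ ObjectProperty.ι _) X).hom
        (((lexColimCocone D).ι.app A).hom.app X y) =
        (colimitObjIsoColimitCompEvaluation (D ⋙ ObjectProperty.ι _) X).hom
          (yoEquiv X (lexColimCocone D).pt ψ) := by
      rw [← hy]
      exact types_congr_hom (colimitObjIsoColimitCompEvaluation_ι_app_hom
        (D ⋙ ObjectProperty.ι _) A X) y
    have h4 := congr_arg (colimitObjIsoColimitCompEvaluation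
      (D ⋙ ObjectProperty.ι _) X).inv h3
    exact (colimitObjIsoColimitCompEvaluation (D ⋙ ObjectProperty.ι _) X).toEquiv.injective h3
  -- hence `uX.hom` factors through `e.inverse.obj A`
  have hfac : g ≫ e.inverse.map ((subsetCocone T).ι.app A) = uX.hom := by
    have h1 : (lexColimCocone D).ι.app A ≫ iso.hom =
        e.inverse.map ((subsetCocone T).ι.app A) :=
      hl.comp_coconePointUniqueUpToIso_hom hc A
    exact (congrArg (g ≫ ·) h1.symm).trans ((Category.assoc _ _ _).symm.trans
      ((congrArg (· ≫ iso.hom) hg).trans ((Category.assoc _ _ _).trans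
        ((congrArg (uX.hom ≫ ·) iso.inv_hom_id).trans (Category.comp_id _)))))
  -- so `e.inverse.map val : e.inverse.obj A ⟶ e.inverse.obj T` is split epi
  have hsplit : (uX.inv ≫ g) ≫ e.inverse.map ((subsetCocone T).ι.app A) = 𝟙 _ := by
    rw [Category.assoc, hfac]
    exact e.unitIso.inv_hom_id_app _
  -- reflect the splitting along the fully faithful `e.inverse`
  obtain ⟨σ, hσ⟩ := e.inverse.map_surjective (uX.inv ≫ g)
  have hσ2 : σ ≫ (subsetCocone T).ι.app A = 𝟙 T := by
    apply e.inverse.map_injective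
    rw [Functor.map_comp, hσ]
    exact hsplit.trans (e.inverse.map_id T).symm
  -- `σ : T → A` is injective, `A` finite
  have hinj : Function.Injective σ := by
    intro a b hab
    have := types_congr_hom hσ2
    refine (this a).symm.trans (Eq.trans ?_ (this b))
    show ((subsetCocone T).ι.app A) (σ a) = ((subsetCocone T).ι.app A) (σ b)
    rw [hab]
  have : Finite ((subsetDiagram T).obj A) := by
    show Finite {x : T // x ∈ A}
    infer_instance
  exact Finite.of_injective σ hinj

end Finiteness

end FreeLexAux

namespace FreeLexAux

variable {O : Type (u + 1)} [Category.{u} O] [HasFiniteLimits O]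

section Unit

/-- A lex functor sends the terminal object to a singleton. -/
noncomputable def lexTerminalUnique (F : O ⥤ Type u) [PreservesFiniteLimits F] :
    Unique (F.obj (⊤_ O)) :=
  Equiv.unique ((PreservesTerminal.iso F).trans Types.terminalIso).toEquiv

lemma exists_nonempty_yo (e : LexCat O ≌ Type u) :
    ∃ X : O, Nonempty (e.functor.obj (yo.obj (op X))) := by
  by_contra h
  push_neg at h
  have hempty : ∀ X : O, IsEmpty (e.functor.obj (yo.obj (op X))) := fun X =>
    h X
  -- every object is isomorphic to the terminal object
  have hiso : ∀ X : O, Nonempty (X ≅ ⊤_ O) := by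
    intro X
    have i1 : e.functor.obj (yo.obj (op X)) ≅ e.functor.obj (yo.obj (op (⊤_ O))) :=
      (Equiv.equivOfIsEmpty (β := e.functor.obj (yo.obj (op (⊤_ O)))) _).toIso
    have i2 : yo.obj (op X) ≅ yo.obj (op (⊤_ O)) := e.functor.preimageIso i1
    have i3 : op X ≅ op (⊤_ O) := yo.preimageIso i2
    exact ⟨i3.unop.symm⟩
  -- hence every lex functor is (pointwise) a singleton
  have hsingle : ∀ (F : LexCat O) (X : O), Nonempty (F.obj.obj X) ∧ Subsingleton (F.obj.obj X) := by
    intro F X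
    letI : PreservesFiniteLimits F.obj := F.property.some
    letI : Unique (F.obj.obj (⊤_ O)) := lexTerminalUnique F.obj
    obtain ⟨iX⟩ := hiso X
    have eqv : F.obj.obj X ≃ F.obj.obj (⊤_ O) := (F.obj.mapIso iX).toEquiv
    constructor
    · exact ⟨eqv.symm default⟩
    · exact eqv.subsingleton
  -- so any two lex functors are isomorphic
  have key : ∀ F G : LexCat O, Nonempty (F ≅ G) := by
    intro F G
    refine ⟨(ObjectProperty.ι _).preimageIso (NatIso.ofComponents (fun X => ?_) ?_)⟩
    · have hF := hsingle F X; have hG := hsingle G X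
      have : Subsingleton (F.obj.obj X) := hF.2
      have : Subsingleton (G.obj.obj X) := hG.2
      exact (equivOfSubsingletonOfSubsingleton
        (fun _ => hG.1.some) (fun _ => hF.1.some)).toIso
    · intro X Y f
      have : Subsingleton (G.obj.obj Y) := (hsingle G Y).2
      ext x
      exact @Subsingleton.elim _ (hsingle G Y).2 _ _
  obtain ⟨i⟩ := key (e.inverse.obj (PEmpty.{u + 1})) (e.inverse.obj (PUnit.{u + 1}))
  have i2 : (PEmpty.{u + 1}) ≅ (PUnit.{u + 1}) :=
    (e.counitIso.app PEmpty).symm ≪≫ e.functor.mapIso i ≪≫ e.counitIso.app PUnit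
  exact (i2.toEquiv.symm PUnit.unit).elim

lemma exists_unit (e : LexCat O ≌ Type u) :
    ∃ R : O, Nonempty (e.functor.obj (yo.obj (op R)) ≃ PUnit.{u + 1}) := by
  obtain ⟨X₀, ⟨x₀⟩⟩ := exists_nonempty_yo e
  set P : LexCat O := e.inverse.obj (PUnit.{u + 1}) with hP
  have cP : e.functor.obj P ≅ PUnit.{u + 1} := e.counitIso.app _
  have hPsub : Subsingleton (e.functor.obj P) := cP.toEquiv.subsingleton
  have hPne : Nonempty (e.functor.obj P) := ⟨cP.toEquiv.symm PUnit.unit⟩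
  -- the retraction in `Type u`
  let a : e.functor.obj P ⟶ e.functor.obj (yo.obj (op X₀)) := TypeCat.ofHom fun _ => x₀
  let b : e.functor.obj (yo.obj (op X₀)) ⟶ e.functor.obj P := TypeCat.ofHom fun _ => hPne.some
  -- reflect it along the equivalence
  let s : P ⟶ yo.obj (op X₀) := e.functor.preimage a
  let r : yo.obj (op X₀) ⟶ P := e.functor.preimage b
  have hsr : s ≫ r = 𝟙 P := by
    apply e.functor.map_injective
    rw [Functor.map_comp, Functor.map_preimage, Functor.map_preimage,
      CategoryTheory.Functor.map_id]
    ext z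
    apply hPsub.elim
  -- the idempotent on `yo X₀` and its avatar on `X₀`
  obtain ⟨fop, hfop⟩ := yo.map_surjective (r ≫ s)
  let ebar : X₀ ⟶ X₀ := fop.unop
  have hebar : ebar ≫ ebar = ebar := by
    have : yo.map ((ebar ≫ ebar).op) = yo.map (ebar.op) := by
      rw [op_comp, Functor.map_comp]
      show yo.map fop ≫ yo.map fop = yo.map fop
      rw [hfop]
      rw [Category.assoc, ← Category.assoc s r s, hsr, Category.id_comp]
    have := yo.map_injective this
    exact Quiver.Hom.op_inj this
  -- split the idempotent
  have hic : IsIdempotentComplete O := by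
    rw [Idempotents.isIdempotentComplete_iff_hasEqualizer_of_id_and_idempotent]
    intro X p _
    infer_instance
  obtain ⟨R, i, q, hiq, hqi⟩ := hic.idempotents_split X₀ ebar hebar
  refine ⟨R, ?_⟩
  -- `P ≅ yo R`
  have hmap_eq : yo.map (ebar.op) = r ≫ s := by
    show yo.map fop = r ≫ s
    exact hfop
  have hio : yo.map i.op ≫ yo.map q.op = yo.map ebar.op := by
    rw [← Functor.map_comp, ← op_comp, hqi]
  have hqo : yo.map q.op ≫ yo.map i.op = 𝟙 _ := by
    rw [← Functor.map_comp, ← op_comp, hiq, op_id, CategoryTheory.Functor.map_id]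
  let isoPR : P ≅ yo.obj (op R) :=
    { hom := s ≫ yo.map i.op
      inv := yo.map q.op ≫ r
      hom_inv_id := by
        rw [Category.assoc, ← Category.assoc (yo.map i.op), hio, hmap_eq]
        rw [show s ≫ (r ≫ s) ≫ r = (s ≫ r) ≫ s ≫ r by simp only [Category.assoc]]
        rw [hsr]
        simp
      inv_hom_id := by
        rw [Category.assoc, ← Category.assoc r s, ← hmap_eq, ← hio]
        rw [show yo.map q.op ≫ (yo.map i.op ≫ yo.map q.op) ≫ yo.map i.op =
          (yo.map q.op ≫ yo.map i.op) ≫ yo.map q.op ≫ yo.map i.op by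
            simp only [Category.assoc]]
        rw [hqo]
        simp }
  exact ⟨(e.functor.mapIso isoPR.symm).toEquiv.trans cP.toEquiv⟩

end Unit

end FreeLexAux

namespace FreeLexAux

variable {O : Type (u + 1)} [Category.{u} O] [HasFiniteLimits O]

section Endgame

variable (e : LexCat O ≌ Type u)

lemma finite_yo (X : Oᵒᵖ) : Finite (e.functor.obj (yo.obj X)) :=
  finite_of_yo_iso_inverse e X.unop rfl

/-- The comparison functor `Oᵒᵖ ⥤ FintypeCat`. -/
noncomputable def cmpFunctor : Oᵒᵖ ⥤ FintypeCat.{u} where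
  obj X :=
    haveI : Finite (e.functor.obj (yo.obj X)) := finite_yo e X
    haveI := Fintype.ofFinite (e.functor.obj (yo.obj X))
    FintypeCat.of (e.functor.obj (yo.obj X))
  map {X Y} f := FintypeCat.homMk (e.functor.map (yo.map f))
  map_id X := by
    apply FintypeCat.hom_ext; intro x
    show e.functor.map (yo.map (𝟙 X)) x = _
    rw [CategoryTheory.Functor.map_id, CategoryTheory.Functor.map_id]
    rfl
  map_comp {X Y Z} f g := by
    apply FintypeCat.hom_ext; intro x
    show e.functor.map (yo.map (f ≫ g)) x = _
    rw [Functor.map_comp, Functor.map_comp]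
    rfl

instance : (cmpFunctor (O := O) e).Faithful where
  map_injective {X Y} f g h := by
    apply yo.map_injective
    apply e.functor.map_injective
    ext x
    exact ConcreteCategory.congr_hom h x

instance : (cmpFunctor (O := O) e).Full where
  map_surjective {X Y} g := by
    obtain ⟨h, hh⟩ := e.functor.map_surjective
      (TypeCat.ofHom (g : e.functor.obj (yo.obj X) → e.functor.obj (yo.obj Y)))
    obtain ⟨f, hf⟩ := yo.map_surjective h
    exact ⟨f, by apply FintypeCat.hom_ext; intro x; show e.functor.map (yo.map f) x = g x; rw [hf, hh]; rfl⟩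

/-- concrete coproduct cocone in `Type u` for a discrete diagram. -/
def ptCocone {n : ℕ} (G : Discrete (Fin n) ⥤ Type u) : Cocone G where
  pt := Σ i : Fin n, G.obj ⟨i⟩
  ι := Discrete.natTrans fun ⟨i⟩ => TypeCat.ofHom fun x => ⟨i, x⟩

def ptCoconeIsColimit {n : ℕ} (G : Discrete (Fin n) ⥤ Type u) : IsColimit (ptCocone G) where
  desc s := TypeCat.ofHom fun x => s.ι.app ⟨x.1⟩ x.2
  uniq s m w := by
    ext ⟨i, x⟩
    exact types_congr_hom (w ⟨i⟩) x

instance : (cmpFunctor (O := O) e).EssSurj where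
  mem_essImage A := by
    obtain ⟨R, ⟨hR⟩⟩ := exists_unit e
    haveI : Fintype A := Fintype.ofFinite A
    set n := Fintype.card A with hn
    set f : Fin n → O := fun _ => R with hf
    refine ⟨op (∏ᶜ f), ⟨FintypeCat.equivEquivIso ?_⟩⟩
    -- the image of `yo (∏ f)` is the coproduct of the images
    have hcol : IsColimit (e.functor.mapCocone (yoCofan f)) :=
      isColimitOfPreserves e.functor (yoCofanIsColimit f)
    have hpt : IsColimit (ptCocone (Discrete.functor (fun i : Fin n => yo.obj (op (f i)))
        ⋙ e.functor)) := ptCoconeIsColimit _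
    have i1 := IsColimit.coconePointUniqueUpToIso hcol hpt
    refine (i1.toEquiv.trans ?_)
    refine (Equiv.trans ?_ (Fintype.equivFin A).symm)
    haveI : ∀ i : Fin n, Unique ((Discrete.functor (fun j : Fin n => yo.obj (op (f j)))
        ⋙ e.functor).obj ⟨i⟩) := fun _ => hR.unique
    exact Equiv.sigmaUnique _ _
end Endgame

end FreeLexAux

namespace FreeLexAux

variable {O : Type (u + 1)} [Category.{u} O] [HasFiniteLimits O]

/-- The main comparison equivalence. -/
noncomputable def mainEquiv (e : LexCat O ≌ Type u) : Oᵒᵖ ≌ FintypeCat.{u} :=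
  haveI : (cmpFunctor e).IsEquivalence := {}
  (cmpFunctor e).asEquivalence

end FreeLexAux


/-- The lex category freely generated by a single object — i.e. a lex
category `O` such that for every lex category `E`, lex functors `O ⥤ E` correspond
(as categories) to objects of `E` — is equivalent to the opposite of the category of
finite sets. -/
theorem free_lex_on_one_object_is_opposite_finite_sets
    (O : Type (u + 1)) [Category.{u} O] [HasFiniteLimits O]
    (hfree : ∀ (E : Type (u + 1)) [Category.{u} E] [HasFiniteLimits E],
      Nonempty ((ObjectProperty.FullSubcategory fun H : O ⥤ E => Nonempty (PreservesFiniteLimits H)) ≌ E)) :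
    Nonempty (O ≌ FintypeCat.{u}ᵒᵖ) := by
  obtain ⟨e⟩ := hfree (Type u)
  exact ⟨(opOpEquivalence O).symm.trans (FreeLexAux.mainEquiv e).op⟩
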